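/- Let K and k_1,…,k_t be positive integers with k_1+⋯+k_t = 2K. On the candidate set {a,b,c} with tie-breaking order c ≻ a ≻ b, let P be the weighted profile consisting of weight 4K of the vote a≻b≻c, weight 4K of a≻c≻b, weight K of b≻a≻c, and weight 9K of b≻c≻a, and let there be t manipulators where manipulator i casts one vote of weight 2k_i. Consider the runoff combination plurality+cup, with the cup agenda pairing a against b first, the winner then meeting c. Then there exists a choice of manipulator votes making c the plurality+cup winner of the combined weighted profile if and only if there exists S ⊆ {1,…,t} with Σ_{i∈S} k_i = K. -/

import Mathlib

/-
Weighted voting on the three-candidate set {a, b, c}. A weighted profile is a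
finite list of pairs (vote, weight), where a vote is a duplicate-free list of
all three candidates (earlier = more preferred) and the weight is a positive
natural number. `T` always denotes the tie-breaking (strict linear) order.
-/

inductive Cand : Type
  | a | b | c
  deriving DecidableEq

instance : Fintype Cand where
  elems := {Cand.a, Cand.b, Cand.c}
  complete := fun x => by cases x <;> decide

/-- A weighted profile: a list of (vote, weight) pairs. -/
abbrev WProfile := List (List Cand × ℕ)

/-- The total weight `n` of a weighted profile. -/
def totalW (P : WProfile) : ℕ := (P.map Prod.snd).sum

/-- `N P x y`: the total weight of votes in `P` ranking `x` above `y`. -/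
def Nw (P : WProfile) (x y : Cand) : ℕ :=
  ((P.filter fun p => p.1.idxOf x < p.1.idxOf y).map Prod.snd).sum

/-- The `k`-approval score of `e`: the total weight of votes ranking `e`
among the top `k` positions. -/
def kApproval (P : WProfile) (k : ℕ) (e : Cand) : ℕ :=
  ((P.filter fun p => p.1.idxOf e < k).map Prod.snd).sum

/-- The Bucklin score of `e`: the least `k` such that the `k`-approval score
of `e` is strictly greater than half the total weight. -/
noncomputable def bucklinScore (P : WProfile) (e : Cand) : ℕ :=
  sInf {k | totalW P < 2 * kApproval P k e}

/-- `v` is a vote: a strict linear order of all three candidates. -/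
def ValidVote (v : List Cand) : Prop := v.Nodup ∧ v.toFinset = Finset.univ

/-- A valid weighted profile: every vote is a linear order and every weight is
positive. -/
def ValidWProfile (P : WProfile) : Prop := ∀ p ∈ P, ValidVote p.1 ∧ 0 < p.2

/-- The `T`-greatest candidate among the maximisers of `f`. -/
def argmaxT (T : LinearOrder Cand) (f : Cand → ℕ) : Cand :=
  @Finset.max' Cand T (Finset.univ.filter fun e => ∀ z, f z ≤ f e) (by
    obtain ⟨w, hw, hm⟩ := Finset.exists_max_image Finset.univ f ⟨Cand.a, Finset.mem_univ _⟩
    exact ⟨w, Finset.mem_filter.2 ⟨Finset.mem_univ _, fun z => hm z (Finset.mem_univ _)⟩⟩)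

/-- The `T`-greatest candidate among the minimisers of `f`. -/
def argminT (T : LinearOrder Cand) (f : Cand → ℕ) : Cand :=
  @Finset.max' Cand T (Finset.univ.filter fun e => ∀ z, f e ≤ f z) (by
    obtain ⟨w, hw, hm⟩ := Finset.exists_min_image Finset.univ f ⟨Cand.a, Finset.mem_univ _⟩
    exact ⟨w, Finset.mem_filter.2 ⟨Finset.mem_univ _, fun z => hm z (Finset.mem_univ _)⟩⟩)

/-- The plurality score of `e`: the total weight of votes ranking `e` first. -/
def pluralityScore (P : WProfile) (e : Cand) : ℕ :=
  ((P.filter fun p => p.1.head? = some e).map Prod.snd).sum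

/-- The plurality winner. -/
def pluralityWinner (T : LinearOrder Cand) (P : WProfile) : Cand :=
  argmaxT T (pluralityScore P)

/-- The Copeland score of `x`: the number of candidates `z ≠ x` with
`N(x,z) > N(z,x)`. -/
def copelandScore (P : WProfile) (x : Cand) : ℕ :=
  (Finset.univ.filter fun z => z ≠ x ∧ Nw P z x < Nw P x z).card

/-- The Copeland winner. -/
def copelandWinner (T : LinearOrder Cand) (P : WProfile) : Cand :=
  argmaxT T (copelandScore P)

/-- The maximin score of `x`: the minimum of `N(x,z)` over `z ≠ x`. -/
def maximinScore (P : WProfile) (x : Cand) : ℕ :=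
  (((Finset.univ : Finset Cand).erase x).image fun z => Nw P x z).min' (by
    apply Finset.Nonempty.image
    cases x <;> decide)

/-- The maximin winner. -/
def maximinWinner (T : LinearOrder Cand) (P : WProfile) : Cand :=
  argmaxT T (maximinScore P)

/-- The Bucklin winner: the `T`-greatest candidate of minimal Bucklin score. -/
noncomputable def bucklinWinner (T : LinearOrder Cand) (P : WProfile) : Cand :=
  argminT T (bucklinScore P)

/-- Winner of the pairwise contest between `x` and `z` (the `T`-greater
candidate winning on a tie). -/
def pairWin (T : LinearOrder Cand) (P : WProfile) (x z : Cand) : Cand :=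
  if Nw P z x < Nw P x z then x
  else if Nw P x z < Nw P z x then z
  else if T.lt x z then z else x

/-- The candidate other than the two (distinct) given ones. -/
def third (x y : Cand) : Cand :=
  if Cand.a ≠ x ∧ Cand.a ≠ y then Cand.a
  else if Cand.b ≠ x ∧ Cand.b ≠ y then Cand.b
  else Cand.c

/-- The cup winner for the agenda in which `p` and `q` meet first and the
winner then meets the remaining candidate. -/
def cupWinner (T : LinearOrder Cand) (p q : Cand) (P : WProfile) : Cand :=
  pairWin T P (pairWin T P p q) (third p q)

/-- Run-off combination `X + Y`: the common winner if `X` and `Y` agree;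
otherwise the pairwise-majority winner between the two winners, with the
`T`-greater candidate winning a tied run-off. -/
def runoffWinner (T : LinearOrder Cand) (X Y : WProfile → Cand) (P : WProfile) : Cand :=
  let x := X P
  let y := Y P
  if x = y then x
  else if Nw P y x < Nw P x y then x
  else if Nw P x y < Nw P y x then y
  else if T.lt x y then y else x

/-- Tie-breaking priority realising the order c ≻ a ≻ b. -/
def prio : Cand → ℕ
  | .a => 1
  | .b => 0
  | .c => 2

/-- The tie-breaking order c ≻ a ≻ b. -/
def Tcab : LinearOrder Cand := LinearOrder.lift' prio (by decide)

/-- The non-manipulators' profile: weight 4K of a≻b≻c, 4K of a≻c≻b,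
K of b≻a≻c and 9K of b≻c≻a. -/
def P14 (K : ℕ) : WProfile :=
  [([Cand.a, Cand.b, Cand.c], 4 * K), ([Cand.a, Cand.c, Cand.b], 4 * K),
   ([Cand.b, Cand.a, Cand.c], K), ([Cand.b, Cand.c, Cand.a], 9 * K)]

/- ## Auxiliary lemmas -/

lemma Tcab_lt (x y : Cand) : Tcab.lt x y ↔ prio x < prio y := Iff.rfl
lemma Tcab_le (x y : Cand) : Tcab.le x y ↔ prio x ≤ prio y := Iff.rfl

lemma filter_map_sum (l : WProfile) (p : List Cand × ℕ → Bool) :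
    ((l.filter p).map Prod.snd).sum = (l.map fun q => if p q then q.2 else 0).sum := by
  induction l with
  | nil => rfl
  | cons h t ih => by_cases hp : p h <;> simp [hp, ih]

lemma Nw_ofFn {t : ℕ} (f : Fin t → List Cand × ℕ) (x y : Cand) :
    Nw (List.ofFn f) x y = ∑ i, if (f i).1.idxOf x < (f i).1.idxOf y then (f i).2 else 0 := by
  rw [Nw, filter_map_sum, List.map_ofFn, List.sum_ofFn]
  simp [Function.comp]

lemma plur_ofFn {t : ℕ} (f : Fin t → List Cand × ℕ) (e : Cand) :
    pluralityScore (List.ofFn f) e = ∑ i, if (f i).1.head? = some e then (f i).2 else 0 := by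
  rw [pluralityScore, filter_map_sum, List.map_ofFn, List.sum_ofFn]
  simp [Function.comp]

lemma Nw_append (P Q : WProfile) (x y : Cand) : Nw (P ++ Q) x y = Nw P x y + Nw Q x y := by
  simp [Nw, List.filter_append]

lemma plur_append (P Q : WProfile) (e : Cand) :
    pluralityScore (P ++ Q) e = pluralityScore P e + pluralityScore Q e := by
  simp [pluralityScore, List.filter_append]

lemma Nw14ab (K : ℕ) : Nw (P14 K) Cand.a Cand.b = 8 * K := by simp +decide [Nw, P14]; try ring
lemma Nw14ba (K : ℕ) : Nw (P14 K) Cand.b Cand.a = 10 * K := by simp +decide [Nw, P14]; try ring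
lemma Nw14ac (K : ℕ) : Nw (P14 K) Cand.a Cand.c = 9 * K := by simp +decide [Nw, P14]; try ring
lemma Nw14ca (K : ℕ) : Nw (P14 K) Cand.c Cand.a = 9 * K := by simp +decide [Nw, P14]; try ring
lemma Nw14bc (K : ℕ) : Nw (P14 K) Cand.b Cand.c = 14 * K := by simp +decide [Nw, P14]; try ring
lemma Nw14cb (K : ℕ) : Nw (P14 K) Cand.c Cand.b = 4 * K := by simp +decide [Nw, P14]; try ring

lemma plur14a (K : ℕ) : pluralityScore (P14 K) Cand.a = 8 * K := by
  simp +decide [pluralityScore, P14]; ring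
lemma plur14b (K : ℕ) : pluralityScore (P14 K) Cand.b = 10 * K := by
  simp +decide [pluralityScore, P14]; ring
lemma plur14c (K : ℕ) : pluralityScore (P14 K) Cand.c = 0 := by
  simp +decide [pluralityScore, P14]

lemma validVote_cases {v : List Cand} (h : ValidVote v) :
    v = [.a,.b,.c] ∨ v = [.a,.c,.b] ∨ v = [.b,.a,.c] ∨ v = [.b,.c,.a] ∨
    v = [.c,.a,.b] ∨ v = [.c,.b,.a] := by
  obtain ⟨hn, hu⟩ := h
  have hl : v.length = 3 := by
    have h2 := congrArg Finset.card hu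
    rw [List.toFinset_card_of_nodup hn] at h2
    simpa [show Fintype.card Cand = 3 by decide] using h2
  match v, hl with
  | [x,y,z], _ =>
    cases x <;> cases y <;> cases z <;> revert hn <;> simp_all

lemma argmaxT_isMax (T : LinearOrder Cand) (f : Cand → ℕ) (z : Cand) :
    f z ≤ f (argmaxT T f) := by
  have hm : argmaxT T f ∈ Finset.univ.filter fun e => ∀ z, f z ≤ f e :=
    @Finset.max'_mem Cand T _ _
  exact (Finset.mem_filter.1 hm).2 z

lemma argmaxT_eq (T : LinearOrder Cand) (f : Cand → ℕ) (e : Cand)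
    (h1 : ∀ z, f z ≤ f e) (h2 : ∀ z, (∀ w, f w ≤ f z) → T.le z e) :
    argmaxT T f = e := by
  refine T.le_antisymm _ _ ?_ ?_
  · refine @Finset.max'_le Cand T _ _ e ?_
    intro y hy
    exact h2 y (Finset.mem_filter.1 hy).2
  · exact @Finset.le_max' Cand T _ e (Finset.mem_filter.2 ⟨Finset.mem_univ _, h1⟩)
/-- Reduction from PARTITION to manipulating `plurality + cup` (agenda: `a`
meets `b`, the winner meets `c`; tie-breaking c ≻ a ≻ b): manipulators with
weights `2k₁, …, 2k_t` (where `k₁ + ⋯ + k_t = 2K`) can make `c` win iff the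
`kᵢ` can be partitioned into two halves summing to `K`. -/
theorem plurality_cup_partition
    (K : ℕ) (hK : 0 < K) (t : ℕ) (k : Fin t → ℕ)
    (hk : ∀ i, 0 < k i) (hsum : ∑ i, k i = 2 * K) :
    (∃ v : Fin t → List Cand, (∀ i, ValidVote (v i)) ∧
        runoffWinner Tcab (pluralityWinner Tcab) (cupWinner Tcab Cand.a Cand.b)
          (P14 K ++ List.ofFn fun i => (v i, 2 * k i)) = Cand.c) ↔
    (∃ S : Finset (Fin t), ∑ i ∈ S, k i = K) := by
  classical
  have hvalsum : ∑ i : Fin t, 2 * k i = 4 * K := by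
    rw [← Finset.mul_sum, hsum]; ring
  constructor
  · rintro ⟨v, hv, hwin⟩
    set P := P14 K ++ List.ofFn fun i => (v i, 2 * k i) with hP
    set Ha := ∑ i : Fin t, if (v i).head? = some Cand.a then 2 * k i else 0 with hHa
    set Hb := ∑ i : Fin t, if (v i).head? = some Cand.b then 2 * k i else 0 with hHb
    set Hc := ∑ i : Fin t, if (v i).head? = some Cand.c then 2 * k i else 0 with hHc
    set Mac := ∑ i : Fin t, if (v i).idxOf Cand.a < (v i).idxOf Cand.c then 2 * k i else 0 with hMac
    set Mca := ∑ i : Fin t, if (v i).idxOf Cand.c < (v i).idxOf Cand.a then 2 * k i else 0 with hMca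
    set Mbc := ∑ i : Fin t, if (v i).idxOf Cand.b < (v i).idxOf Cand.c then 2 * k i else 0 with hMbc
    set Mcb := ∑ i : Fin t, if (v i).idxOf Cand.c < (v i).idxOf Cand.b then 2 * k i else 0 with hMcb
    -- profile scores
    have hpa : pluralityScore P Cand.a = 8 * K + Ha := by
      rw [hP, plur_append, plur14a, plur_ofFn]
    have hpb : pluralityScore P Cand.b = 10 * K + Hb := by
      rw [hP, plur_append, plur14b, plur_ofFn]
    have hpc : pluralityScore P Cand.c = 0 + Hc := by
      rw [hP, plur_append, plur14c, plur_ofFn]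
    have hNac : Nw P Cand.a Cand.c = 9 * K + Mac := by
      rw [hP, Nw_append, Nw14ac, Nw_ofFn]
    have hNca : Nw P Cand.c Cand.a = 9 * K + Mca := by
      rw [hP, Nw_append, Nw14ca, Nw_ofFn]
    have hNbc : Nw P Cand.b Cand.c = 14 * K + Mbc := by
      rw [hP, Nw_append, Nw14bc, Nw_ofFn]
    have hNcb : Nw P Cand.c Cand.b = 4 * K + Mcb := by
      rw [hP, Nw_append, Nw14cb, Nw_ofFn]
    -- structural facts about the manipulator sums
    have hMacca : Mac + Mca = 4 * K := by
      rw [hMac, hMca, ← Finset.sum_add_distrib, ← hvalsum]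
      refine Finset.sum_congr rfl fun i _ => ?_
      rcases validVote_cases (hv i) with h|h|h|h|h|h <;> rw [h] <;> simp +decide
    have hHaMac : Ha ≤ Mac := by
      rw [hHa, hMac]
      refine Finset.sum_le_sum fun i _ => ?_
      rcases validVote_cases (hv i) with h|h|h|h|h|h <;> rw [h] <;> simp +decide
    have hMcb4 : Mcb ≤ 4 * K := by
      rw [hMcb, ← hvalsum]
      refine Finset.sum_le_sum fun i _ => ?_
      split <;> omega
    have hHc4 : Hc ≤ 4 * K := by
      rw [hHc, ← hvalsum]
      refine Finset.sum_le_sum fun i _ => ?_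
      split <;> omega
    -- the plurality winner is not c
    have hpwb : pluralityScore P Cand.b ≤ pluralityScore P (pluralityWinner Tcab P) := by
      unfold pluralityWinner
      exact argmaxT_isMax _ _ _
    have hpwnec : pluralityWinner Tcab P ≠ Cand.c := by
      intro h
      rw [h, hpc, hpb] at hpwb
      omega
    -- the main argument, given the runoff inequality
    have main : Nw P (pluralityWinner Tcab P) Cand.c ≤ Nw P Cand.c (pluralityWinner Tcab P) →
        ∃ S : Finset (Fin t), ∑ i ∈ S, k i = K := by
      intro hkey
      cases hpwc : pluralityWinner Tcab P with
      | c => exact absurd hpwc hpwnec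
      | b =>
        exfalso
        rw [hpwc, hNbc, hNcb] at hkey
        omega
      | a =>
        rw [hpwc, hNac, hNca] at hkey
        rw [hpwc, hpb, hpa] at hpwb
        refine ⟨Finset.univ.filter fun i => (v i).head? = some Cand.a, ?_⟩
        have h2 : 2 * ∑ i ∈ Finset.univ.filter (fun i => (v i).head? = some Cand.a), k i
            = 2 * K := by
          rw [Finset.mul_sum, Finset.sum_filter]
          rw [← hHa]  -- identify with Ha
          omega
        omega
    -- case analysis on the runoff
    simp only [runoffWinner] at hwin
    split_ifs at hwin with h1 h2 h3 h4
    · exact main (by rw [hwin])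
    · exact absurd hwin hpwnec
    · rw [hwin] at h3
      exact main h3.le
    · rw [hwin] at h2
      exact main (Nat.le_of_not_lt h2)
    · exact absurd hwin hpwnec
  · rintro ⟨S, hS⟩
    set w : Fin t → List Cand :=
      fun i => if i ∈ S then [Cand.a, Cand.c, Cand.b] else [Cand.c, Cand.a, Cand.b] with hw
    refine ⟨w, fun i => ?_, ?_⟩
    · rw [hw]
      by_cases h : i ∈ S <;> simp only [h, if_true, if_false] <;>
        exact ⟨by decide, by decide⟩
    · set P := P14 K ++ List.ofFn fun i => (w i, 2 * k i) with hP
      have hinS : (∑ i : Fin t, if i ∈ S then 2 * k i else 0) = 2 * K := by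
        rw [Finset.sum_ite_mem, Finset.univ_inter, ← Finset.mul_sum, hS]
      have houtS : (∑ i : Fin t, if i ∈ S then 0 else 2 * k i) = 2 * K := by
        have hh : (∑ i : Fin t, if i ∈ S then 2 * k i else 0)
            + (∑ i : Fin t, if i ∈ S then 0 else 2 * k i) = 4 * K := by
          rw [← Finset.sum_add_distrib, ← hvalsum]
          refine Finset.sum_congr rfl fun i _ => ?_
          split <;> omega
        omega
      -- Nw values
      have hNab : Nw P Cand.a Cand.b = 12 * K := by
        rw [hP, Nw_append, Nw14ab, Nw_ofFn]
        have : ∀ i : Fin t,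
            (if (w i).idxOf Cand.a < (w i).idxOf Cand.b then 2 * k i else 0) = 2 * k i := by
          intro i; rw [hw]; by_cases h : i ∈ S <;> simp +decide [h]
        simp only [this]
        omega
      have hNba : Nw P Cand.b Cand.a = 10 * K := by
        rw [hP, Nw_append, Nw14ba, Nw_ofFn]
        have : ∀ i : Fin t,
            (if (w i).idxOf Cand.b < (w i).idxOf Cand.a then 2 * k i else 0) = 0 := by
          intro i; rw [hw]; by_cases h : i ∈ S <;> simp +decide [h]
        simp only [this]
        simp
      have hNac : Nw P Cand.a Cand.c = 11 * K := by
        rw [hP, Nw_append, Nw14ac, Nw_ofFn]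
        have : ∀ i : Fin t,
            (if (w i).idxOf Cand.a < (w i).idxOf Cand.c then 2 * k i else 0)
              = if i ∈ S then 2 * k i else 0 := by
          intro i; rw [hw]; by_cases h : i ∈ S <;> simp +decide [h]
        simp only [this]
        omega
      have hNca : Nw P Cand.c Cand.a = 11 * K := by
        rw [hP, Nw_append, Nw14ca, Nw_ofFn]
        have : ∀ i : Fin t,
            (if (w i).idxOf Cand.c < (w i).idxOf Cand.a then 2 * k i else 0)
              = if i ∈ S then 0 else 2 * k i := by
          intro i; rw [hw]; by_cases h : i ∈ S <;> simp +decide [h]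
        simp only [this]
        omega
      -- plurality scores
      have hpa : pluralityScore P Cand.a = 10 * K := by
        rw [hP, plur_append, plur14a, plur_ofFn]
        have : ∀ i : Fin t,
            (if (w i).head? = some Cand.a then 2 * k i else 0)
              = if i ∈ S then 2 * k i else 0 := by
          intro i; rw [hw]; by_cases h : i ∈ S <;> simp +decide [h]
        simp only [this]
        omega
      have hpb : pluralityScore P Cand.b = 10 * K := by
        rw [hP, plur_append, plur14b, plur_ofFn]
        have : ∀ i : Fin t,
            (if (w i).head? = some Cand.b then 2 * k i else 0) = 0 := by
          intro i; rw [hw]; by_cases h : i ∈ S <;> simp +decide [h]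
        simp only [this]
        simp
      have hpc : pluralityScore P Cand.c = 2 * K := by
        rw [hP, plur_append, plur14c, plur_ofFn]
        have : ∀ i : Fin t,
            (if (w i).head? = some Cand.c then 2 * k i else 0)
              = if i ∈ S then 0 else 2 * k i := by
          intro i; rw [hw]; by_cases h : i ∈ S <;> simp +decide [h]
        simp only [this]
        omega
      -- winners
      have hpw : pluralityWinner Tcab P = Cand.a := by
        unfold pluralityWinner
        refine argmaxT_eq _ _ _ ?_ ?_
        · intro z; cases z <;> simp only [hpa, hpb, hpc] <;> omega
        · intro z hz
          cases z with
          | a => rw [Tcab_le]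
          | b => rw [Tcab_le]; decide
          | c =>
            exfalso
            have := hz Cand.a
            rw [hpa, hpc] at this
            omega
      have hcw : cupWinner Tcab Cand.a Cand.b P = Cand.c := by
        have hthird : third Cand.a Cand.b = Cand.c := by decide
        unfold cupWinner
        rw [hthird]
        have h1 : pairWin Tcab P Cand.a Cand.b = Cand.a := by
          unfold pairWin
          rw [if_pos (by rw [hNba, hNab]; omega)]
        rw [h1]
        unfold pairWin
        rw [if_neg (by rw [hNca, hNac]; omega),
            if_neg (by rw [hNca, hNac]; omega),
            if_pos (show Tcab.lt Cand.a Cand.c by rw [Tcab_lt]; decide)]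
      simp only [runoffWinner]
      rw [hpw, hcw]
      rw [if_neg (by decide),
          if_neg (by rw [hNca, hNac]; omega),
          if_neg (by rw [hNca, hNac]; omega),
          if_pos (show Tcab.lt Cand.a Cand.c by rw [Tcab_lt]; decide)]
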